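/- For two sequences of closed balls U = (u_1,…,u_n) and W = (w_1,…,w_m) in ℝ^d, the quantity F₁^max(U,W) = sup over realizations A of U and B of W of F_c(A,B) satisfies the recurrence F₁^max restricted to prefixes: F(i+1,k) = min_{1 ≤ j ≤ k} max(F(i,j), D(i+1,j,k)) for i ≥ 1, with F(1,k) = D(1,1,k), where D(i,j,k) = max_{p ∈ u_i} min_{j ≤ x ≤ k} max_{q ∈ w_x} d(p,q); i.e., the value defined by this recurrence at (n,m), minimized over the last index, equals F₁^max(U,W). -/

import Mathlib

open Metric

noncomputable section

/-- Points in `ℝ^k`. -/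
abbrev Pt (k : ℕ) := EuclideanSpace ℝ (Fin k)

/-- One step in the discrete Fréchet coupling: advance in `A`, in `B`, or both. -/
def dfStep {n m : ℕ} (p q : Fin (n+1) × Fin (m+1)) : Prop :=
  ((q.1 : ℕ) = (p.1 : ℕ) + 1 ∧ q.2 = p.2) ∨
  (q.1 = p.1 ∧ (q.2 : ℕ) = (p.2 : ℕ) + 1) ∨
  ((q.1 : ℕ) = (p.1 : ℕ) + 1 ∧ (q.2 : ℕ) = (p.2 : ℕ) + 1)

/-- `(a_n, b_m)` is reachable from `(a_1, b_1)` in the graph `G_δ`. -/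
def dfReach {k n m : ℕ} (a : Fin (n+1) → Pt k) (b : Fin (m+1) → Pt k) (δ : ℝ) : Prop :=
  dist (a 0) (b 0) ≤ δ ∧ dist (a (Fin.last n)) (b (Fin.last m)) ≤ δ ∧
  Relation.ReflTransGen
    (fun p q => dfStep p q ∧ dist (a p.1) (b p.2) ≤ δ ∧ dist (a q.1) (b q.2) ≤ δ)
    (0, 0) (Fin.last n, Fin.last m)

/-- The discrete Fréchet distance. -/
def dF {k n m : ℕ} (a : Fin (n+1) → Pt k) (b : Fin (m+1) → Pt k) : ℝ :=
  sInf {δ : ℝ | 0 < δ ∧ dfReach a b δ}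

/-- One-sided discrete Fréchet distance with shortcuts on side `B`:
the minimum of `dF A B'` over nonempty subsequences `B'` of `B`. -/
def Fc {k n m : ℕ} (a : Fin (n+1) → Pt k) (b : Fin (m+1) → Pt k) : ℝ :=
  sInf {v : ℝ | ∃ (l : ℕ) (f : Fin (l+1) → Fin (m+1)), StrictMono f ∧ v = dF a (b ∘ f)}

/-- `max_{q ∈ D(c,r)} d(p, q)`. -/
def ballDmax {d : ℕ} (p c : Pt d) (r : ℝ) : ℝ := sSup ((dist p ·) '' closedBall c r)




/-- grid reachability for a relation containing all dfSteps -/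
lemma rtg_grid {n m : ℕ} (R : (Fin (n+1) × Fin (m+1)) → (Fin (n+1) × Fin (m+1)) → Prop)
    (h1 : ∀ p q, dfStep p q → R p q) :
    ∀ (u : Fin (n+1)) (v : Fin (m+1)), Relation.ReflTransGen R (0, 0) (u, v) := by
  have row : ∀ u : Fin (n+1), Relation.ReflTransGen R (0,0) (u, 0) := by
    intro u
    induction u using Fin.induction with
    | zero => exact Relation.ReflTransGen.refl
    | succ i ih =>
        exact ih.tail (h1 _ _ (Or.inl ⟨by simp, rfl⟩))
  intro u v
  induction v using Fin.induction with
  | zero => exact row u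
  | succ j ih =>
      exact ih.tail (h1 _ _ (Or.inr (Or.inl ⟨rfl, by simp⟩)))

/-- reach holds for a large enough δ -/
lemma dfReach_big {k n m : ℕ} (a : Fin (n+1) → Pt k) (b : Fin (m+1) → Pt k) :
    ∃ δ : ℝ, 0 < δ ∧ dfReach a b δ := by
  classical
  obtain ⟨δ0, hδ0⟩ : ∃ δ0, ∀ (i : Fin (n+1)) (j : Fin (m+1)), dist (a i) (b j) ≤ δ0 := by
    refine ⟨(Finset.univ ×ˢ Finset.univ : Finset (Fin (n+1) × Fin (m+1))).sup'
      (by simp [Finset.univ_nonempty]) (fun p => dist (a p.1) (b p.2)), fun i j => ?_⟩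
    exact Finset.le_sup' (f := fun p : Fin (n+1) × Fin (m+1) => dist (a p.1) (b p.2))
      (by simp : (i, j) ∈ _)
  refine ⟨max δ0 1, lt_of_lt_of_le one_pos (le_max_right _ _), ?_, ?_, ?_⟩
  · exact (hδ0 _ _).trans (le_max_left _ _)
  · exact (hδ0 _ _).trans (le_max_left _ _)
  · exact rtg_grid _ (fun p q hs => ⟨hs, (hδ0 _ _).trans (le_max_left _ _),
      (hδ0 _ _).trans (le_max_left _ _)⟩) _ _

lemma dF_nonneg {k n m : ℕ} (a : Fin (n+1) → Pt k) (b : Fin (m+1) → Pt k) : 0 ≤ dF a b :=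
  Real.sInf_nonneg (fun _ hx => hx.1.le)

/-- dF ≤ δ when there is a staircase τ realizing it -/
lemma dF_le_of_tau {k n l : ℕ} (a : Fin (n+1) → Pt k) (b : Fin (l+1) → Pt k) (δ : ℝ)
    (hδ : 0 < δ) (τ : Fin (n+1) → Fin (l+1)) (hτ0 : τ 0 = 0) (hτl : τ (Fin.last n) = Fin.last l)
    (hstep : ∀ i : Fin n, ((τ i.succ : ℕ) = (τ i.castSucc : ℕ)) ∨
      ((τ i.succ : ℕ) = (τ i.castSucc : ℕ) + 1))
    (hdist : ∀ i, dist (a i) (b (τ i)) ≤ δ) : dF a b ≤ δ := by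
  have hpath : ∀ u : Fin (n+1), Relation.ReflTransGen
      (fun p q => dfStep p q ∧ dist (a p.1) (b p.2) ≤ δ ∧ dist (a q.1) (b q.2) ≤ δ)
      (0, 0) (u, τ u) := by
    intro u
    induction u using Fin.induction with
    | zero => rw [hτ0]
    | succ i ih =>
        refine ih.tail ⟨?_, hdist _, hdist _⟩
        rcases hstep i with h | h
        · exact Or.inl ⟨by simp, Fin.val_injective h⟩
        · exact Or.inr (Or.inr ⟨by simp, h⟩)
  have hreach : dfReach a b δ := by
    refine ⟨by have := hdist 0; rwa [hτ0] at this, by have := hdist (Fin.last n); rwa [hτl] at this, ?_⟩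
    have := hpath (Fin.last n); rwa [hτl] at this
  exact csInf_le ⟨0, fun x hx => hx.1.le⟩ ⟨hδ, hreach⟩

/-- extraction of a monotone matching from reachability -/
lemma exists_mono_of_dfReach {k n l : ℕ} (a : Fin (n+1) → Pt k) (b : Fin (l+1) → Pt k)
    (δ : ℝ) (h : dfReach a b δ) :
    ∃ σ : Fin (n+1) → Fin (l+1), Monotone σ ∧ ∀ i, dist (a i) (b (σ i)) ≤ δ := by
  classical
  obtain ⟨h0, hl, hpath⟩ := h
  have key : ∀ p : Fin (n+1) × Fin (l+1),
      Relation.ReflTransGen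
        (fun p q => dfStep p q ∧ dist (a p.1) (b p.2) ≤ δ ∧ dist (a q.1) (b q.2) ≤ δ)
        p (Fin.last n, Fin.last l) →
      dist (a p.1) (b p.2) ≤ δ →
      ∃ σ : Fin (n+1) → Fin (l+1), Monotone σ ∧
        (∀ i, p.1 ≤ i → dist (a i) (b (σ i)) ≤ δ) ∧ p.2 ≤ σ p.1 := by
    intro p hp
    induction hp using Relation.ReflTransGen.head_induction_on with
    | refl =>
        intro hlast
        refine ⟨fun _ => Fin.last l, monotone_const, fun i hi => ?_, Fin.le_last _⟩
        have : i = Fin.last n := le_antisymm (Fin.le_last _) hi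
        rw [this]; exact hlast
    | head hstep _ ih =>
        rename_i p q _
        intro hdp
        obtain ⟨σq, hmono, hcond, hpq⟩ := ih hstep.2.2
        rcases hstep.1 with ⟨hq1, hq2⟩ | ⟨hq1, hq2⟩ | ⟨hq1, hq2⟩
        · -- q.1 = p.1 + 1, q.2 = p.2
          refine ⟨fun i => if (i : ℕ) ≤ (p.1 : ℕ) then p.2 else σq i, ?_, ?_, ?_⟩
          · intro x y hxy
            by_cases hx : (x : ℕ) ≤ (p.1 : ℕ) <;> by_cases hy : (y : ℕ) ≤ (p.1 : ℕ) <;>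
              simp only [hx, hy, if_true, if_false, le_refl]
            · -- p.2 ≤ σq y
              have hqy : q.1 ≤ y := by rw [Fin.le_def]; omega
              calc (p.2 : Fin (l+1)) = q.2 := hq2.symm
                _ ≤ σq q.1 := hpq
                _ ≤ σq y := hmono hqy
            · omega
            · exact hmono hxy
          · intro i hi
            by_cases hx : (i : ℕ) ≤ (p.1 : ℕ)
            · have : i = p.1 := by
                rw [Fin.le_def] at hi; exact Fin.val_injective (le_antisymm hx hi)
              rw [this]; simpa using hdp
            · simp only [hx, if_false]
              exact hcond i (by rw [Fin.le_def]; omega)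
          · simp
        · -- q.1 = p.1, q.2 = p.2 + 1
          refine ⟨σq, hmono, fun i hi => hcond i (hq1 ▸ hi), ?_⟩
          calc p.2 ≤ q.2 := by rw [Fin.le_def]; omega
            _ ≤ σq q.1 := hpq
            _ = σq p.1 := by rw [hq1]
        · -- both +1
          refine ⟨fun i => if (i : ℕ) ≤ (p.1 : ℕ) then p.2 else σq i, ?_, ?_, ?_⟩
          · intro x y hxy
            by_cases hx : (x : ℕ) ≤ (p.1 : ℕ) <;> by_cases hy : (y : ℕ) ≤ (p.1 : ℕ) <;>
              simp only [hx, hy, if_true, if_false, le_refl]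
            · have hqy : q.1 ≤ y := by rw [Fin.le_def]; omega
              calc (p.2 : Fin (l+1)) ≤ q.2 := by rw [Fin.le_def]; omega
                _ ≤ σq q.1 := hpq
                _ ≤ σq y := hmono hqy
            · omega
            · exact hmono hxy
          · intro i hi
            by_cases hx : (i : ℕ) ≤ (p.1 : ℕ)
            · have : i = p.1 := by
                rw [Fin.le_def] at hi; exact Fin.val_injective (le_antisymm hx hi)
              rw [this]; simpa using hdp
            · simp only [hx, if_false]
              exact hcond i (by rw [Fin.le_def]; omega)
          · simp
  obtain ⟨σ, hmono, hcond, _⟩ := key (0, 0) hpath h0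
  exact ⟨σ, hmono, fun i => hcond i (Fin.zero_le _)⟩


/-- the max of dist (a i) (b (σ i)) over all i -/
def mxVal {k n m : ℕ} (a : Fin (n+1) → Pt k) (b : Fin (m+1) → Pt k)
    (σ : Fin (n+1) → Fin (m+1)) : ℝ :=
  Finset.univ.sup' Finset.univ_nonempty (fun i => dist (a i) (b (σ i)))

lemma le_mxVal {k n m : ℕ} (a : Fin (n+1) → Pt k) (b : Fin (m+1) → Pt k)
    (σ : Fin (n+1) → Fin (m+1)) (i : Fin (n+1)) : dist (a i) (b (σ i)) ≤ mxVal a b σ :=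
  Finset.le_sup' (f := fun i => dist (a i) (b (σ i))) (Finset.mem_univ i)

lemma mxVal_nonneg {k n m : ℕ} (a : Fin (n+1) → Pt k) (b : Fin (m+1) → Pt k)
    (σ : Fin (n+1) → Fin (m+1)) : 0 ≤ mxVal a b σ :=
  le_trans dist_nonneg (le_mxVal a b σ 0)

lemma mxVal_le {k n m : ℕ} (a : Fin (n+1) → Pt k) (b : Fin (m+1) → Pt k)
    (σ : Fin (n+1) → Fin (m+1)) (δ : ℝ) (h : ∀ i, dist (a i) (b (σ i)) ≤ δ) :
    mxVal a b σ ≤ δ :=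
  Finset.sup'_le _ _ (fun i _ => h i)

/-- direction 2 : Fc ≤ mxVal σ for any monotone σ -/
lemma Fc_le_mxVal {k n m : ℕ} (a : Fin (n+1) → Pt k) (b : Fin (m+1) → Pt k)
    (σ : Fin (n+1) → Fin (m+1)) (hσ : Monotone σ) : Fc a b ≤ mxVal a b σ := by
  classical
  set s : Finset (Fin (m+1)) := Finset.image σ Finset.univ with hs
  have hsn : 0 < s.card := Finset.card_pos.2 ⟨σ 0, Finset.mem_image_of_mem σ (Finset.mem_univ 0)⟩
  set l : ℕ := s.card - 1 with hl
  have hcard : s.card = l + 1 := by omega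
  set e := s.orderIsoOfFin hcard with he
  set f : Fin (l+1) → Fin (m+1) := fun x => (e x : Fin (m+1)) with hf
  have hfm : StrictMono f := fun x y hxy => by
    simpa [hf] using (e.lt_iff_lt.2 hxy)
  set τ : Fin (n+1) → Fin (l+1) := fun i =>
    e.symm ⟨σ i, Finset.mem_image_of_mem σ (Finset.mem_univ i)⟩ with hτ
  have hfτ : ∀ i, f (τ i) = σ i := by intro i; simp [hf, hτ]
  have hτmono : Monotone τ := by
    intro x y hxy
    exact e.symm.monotone (by simpa using hσ hxy)
  -- τ 0 = 0
  have hmin : ∀ x : Fin (l+1), (⟨σ 0, Finset.mem_image_of_mem σ (Finset.mem_univ 0)⟩ : s) ≤ e x := by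
    intro x
    obtain ⟨i, -, hi⟩ := Finset.mem_image.1 (e x).2
    rw [← Subtype.coe_le_coe]
    calc (σ 0 : Fin (m+1)) ≤ σ i := hσ (Fin.zero_le _)
      _ = (e x : Fin (m+1)) := hi
  have hτ0 : τ 0 = 0 := by
    have h1 : e (τ 0) = e 0 := by
      refine le_antisymm ?_ (e.monotone (Fin.zero_le _))
      rw [hτ]
      simp only []
      rw [OrderIso.apply_symm_apply]
      exact hmin 0
    have := e.injective h1
    rwa [hτ] at this ⊢
  -- τ last = last
  have hmax : ∀ x : Fin (l+1),
      e x ≤ (⟨σ (Fin.last n), Finset.mem_image_of_mem σ (Finset.mem_univ _)⟩ : s) := by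
    intro x
    obtain ⟨i, -, hi⟩ := Finset.mem_image.1 (e x).2
    rw [← Subtype.coe_le_coe]
    calc (e x : Fin (m+1)) = σ i := hi.symm
      _ ≤ σ (Fin.last n) := hσ (Fin.le_last _)
  have hτl : τ (Fin.last n) = Fin.last l := by
    have h1 : e (τ (Fin.last n)) = e (Fin.last l) := by
      refine le_antisymm (e.monotone (Fin.le_last _)) ?_
      rw [hτ]
      simp only []
      rw [OrderIso.apply_symm_apply]
      exact hmax _
    have := e.injective h1
    rwa [hτ] at this ⊢
  -- steps
  have hstep : ∀ i : Fin n, ((τ i.succ : ℕ) = (τ i.castSucc : ℕ)) ∨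
      ((τ i.succ : ℕ) = (τ i.castSucc : ℕ) + 1) := by
    intro i
    have hle : (τ i.castSucc : ℕ) ≤ (τ i.succ : ℕ) :=
      Fin.le_def.1 (hτmono (by rw [Fin.le_def]; simp))
    by_contra hcon
    push_neg at hcon
    obtain ⟨h1, h2⟩ := hcon
    have hlt : (τ i.castSucc : ℕ) + 1 < (τ i.succ : ℕ) := by omega
    have htlt : (τ i.castSucc : ℕ) + 1 < l + 1 := lt_trans hlt (τ i.succ).isLt
    set t : Fin (l+1) := ⟨(τ i.castSucc : ℕ) + 1, htlt⟩ with ht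
    obtain ⟨i', -, hi'⟩ := Finset.mem_image.1 (e t).2
    have hτi' : τ i' = t := by
      rw [hτ]
      apply e.injective
      simp only []
      rw [OrderIso.apply_symm_apply]
      exact Subtype.ext hi'
    have htv : (t : ℕ) = (τ i.castSucc : ℕ) + 1 := rfl
    rcases le_or_gt i' i.castSucc with hc | hc
    · have h3 : (τ i' : ℕ) ≤ (τ i.castSucc : ℕ) := Fin.le_def.1 (hτmono hc)
      rw [hτi'] at h3
      omega
    · have hc2 : i.succ ≤ i' := by
        rw [Fin.lt_def] at hc
        rw [Fin.le_def]
        simp only [Fin.val_succ]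
        simp only [Fin.coe_castSucc] at hc
        omega
      have h3 : (τ i.succ : ℕ) ≤ (τ i' : ℕ) := Fin.le_def.1 (hτmono hc2)
      rw [hτi'] at h3
      omega
  -- conclude
  have hFcle : ∀ δ : ℝ, mxVal a b σ < δ → Fc a b ≤ δ := by
    intro δ hδ
    have hδ0 : 0 < δ := lt_of_le_of_lt (mxVal_nonneg a b σ) hδ
    have hdist : ∀ i, dist (a i) ((b ∘ f) (τ i)) ≤ δ := by
      intro i
      rw [Function.comp_apply, hfτ i]
      exact (le_mxVal a b σ i).trans hδ.le
    have hdF : dF a (b ∘ f) ≤ δ := dF_le_of_tau a (b ∘ f) δ hδ0 τ hτ0 hτl hstep hdist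
    have hFc : Fc a b ≤ dF a (b ∘ f) :=
      csInf_le ⟨0, fun x hx => by obtain ⟨l', f', hf', rfl⟩ := hx; exact dF_nonneg _ _⟩
        ⟨l, f, hfm, rfl⟩
    exact hFc.trans hdF
  by_contra hcon
  push_neg at hcon
  obtain ⟨δ, hδ1, hδ2⟩ := exists_between hcon
  exact absurd (hFcle δ hδ1) (not_le.2 hδ2)

/-- direction 1 : the min over monotone couplings is ≤ Fc -/
lemma le_Fc {k n m : ℕ} (a : Fin (n+1) → Pt k) (b : Fin (m+1) → Pt k) :
    sInf {v : ℝ | ∃ σ : Fin (n+1) → Fin (m+1), Monotone σ ∧ v = mxVal a b σ} ≤ Fc a b := by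
  classical
  have hbdd : BddBelow {v : ℝ | ∃ σ : Fin (n+1) → Fin (m+1), Monotone σ ∧ v = mxVal a b σ} :=
    ⟨0, fun x hx => by obtain ⟨σ', _, rfl⟩ := hx; exact mxVal_nonneg a b σ'⟩
  refine le_csInf ⟨dF a (b ∘ id), m, id, strictMono_id, rfl⟩ ?_
  rintro v ⟨l, f, hf, rfl⟩
  refine le_csInf (dfReach_big a (b ∘ f)) ?_
  rintro δ ⟨hδ0, hreach⟩
  obtain ⟨σ', hσ'm, hσ'd⟩ := exists_mono_of_dfReach a (b ∘ f) δ hreach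
  have h1 : sInf {v : ℝ | ∃ σ : Fin (n+1) → Fin (m+1), Monotone σ ∧ v = mxVal a b σ}
      ≤ mxVal a b (f ∘ σ') := csInf_le hbdd ⟨f ∘ σ', hf.monotone.comp hσ'm, rfl⟩
  exact h1.trans (mxVal_le a b _ δ (fun i => hσ'd i))

lemma mxSet_finite {k n m : ℕ} (a : Fin (n+1) → Pt k) (b : Fin (m+1) → Pt k) :
    {v : ℝ | ∃ σ : Fin (n+1) → Fin (m+1), Monotone σ ∧ v = mxVal a b σ}.Finite := by
  refine Set.Finite.subset (Set.Finite.image (fun σ => mxVal a b σ) (Set.toFinite Set.univ)) ?_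
  rintro v ⟨σ', _, rfl⟩
  exact ⟨σ', trivial, rfl⟩

lemma Fc_eq_mxVal {k n m : ℕ} (a : Fin (n+1) → Pt k) (b : Fin (m+1) → Pt k) :
    Fc a b = sInf {v : ℝ | ∃ σ : Fin (n+1) → Fin (m+1), Monotone σ ∧ v = mxVal a b σ} := by
  refine le_antisymm ?_ (le_Fc a b)
  have hne : {v : ℝ | ∃ σ : Fin (n+1) → Fin (m+1), Monotone σ ∧ v = mxVal a b σ}.Nonempty :=
    ⟨mxVal a b (fun _ => 0), ⟨fun _ => 0, monotone_const, rfl⟩⟩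
  obtain ⟨σ', hσ', hv⟩ := Set.Nonempty.csInf_mem hne (mxSet_finite a b)
  rw [hv]
  exact Fc_le_mxVal a b σ' hσ'



/-- there is a farthest point of a ball from p, at distance dist p c + r -/
lemma exists_far_point {d : ℕ} (hd : 0 < d) (p c : Pt d) (r : ℝ) (hr : 0 ≤ r) :
    ∃ q ∈ closedBall c r, dist p q = dist p c + r := by
  classical
  by_cases hpc : p = c
  · refine ⟨c + r • EuclideanSpace.single (⟨0, hd⟩ : Fin d) (1:ℝ), ?_, ?_⟩
    · rw [mem_closedBall, dist_eq_norm]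
      simp [norm_smul, EuclideanSpace.norm_single, abs_of_nonneg hr]
    · rw [hpc, dist_eq_norm]
      simp [norm_smul, EuclideanSpace.norm_single, abs_of_nonneg hr]
  · have hnorm : ‖c - p‖ ≠ 0 := by
      simp only [ne_eq, norm_eq_zero, sub_eq_zero]
      exact fun h => hpc (h.symm)
    have hnpos : 0 < ‖c - p‖ := lt_of_le_of_ne (norm_nonneg _) (Ne.symm hnorm)
    refine ⟨c + (r * ‖c - p‖⁻¹) • (c - p), ?_, ?_⟩
    · rw [mem_closedBall, dist_eq_norm]
      have : c + (r * ‖c - p‖⁻¹) • (c - p) - c = (r * ‖c - p‖⁻¹) • (c - p) := by abel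
      rw [this, norm_smul]
      rw [Real.norm_eq_abs, abs_of_nonneg (by positivity)]
      rw [mul_assoc, inv_mul_cancel₀ hnorm, mul_one]
    · have heq : c + (r * ‖c - p‖⁻¹) • (c - p) - p = (1 + r * ‖c - p‖⁻¹) • (c - p) := by
        rw [add_smul, one_smul]; abel
      rw [dist_eq_norm', heq, norm_smul, Real.norm_eq_abs, abs_of_nonneg (by positivity),
        dist_eq_norm']
      rw [add_mul, one_mul, mul_assoc, inv_mul_cancel₀ hnorm, mul_one, add_comm]
lemma ballDmax_eq {d : ℕ} (hd : 0 < d) (p c : Pt d) (r : ℝ) (hr : 0 ≤ r) :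
    ballDmax p c r = dist p c + r := by
  obtain ⟨q, hq, hdq⟩ := exists_far_point hd p c r hr
  refine le_antisymm ?_ ?_
  · refine csSup_le ⟨dist p c, c, mem_closedBall_self hr, rfl⟩ ?_
    rintro v ⟨x, hx, rfl⟩
    calc dist p x ≤ dist p c + dist c x := dist_triangle _ _ _
      _ ≤ dist p c + r := by
          have := mem_closedBall.1 hx
          rw [dist_comm] at this
          linarith
  · rw [← hdq]
    refine le_csSup ⟨dist p c + r, ?_⟩ ⟨q, hq, rfl⟩
    rintro v ⟨x, hx, rfl⟩
    calc dist p x ≤ dist p c + dist c x := dist_triangle _ _ _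
      _ ≤ dist p c + r := by
          have := mem_closedBall.1 hx
          rw [dist_comm] at this
          linarith


section Rec
variable {d m : ℕ} (cw : Fin (m+1) → Pt d) (rw : Fin (m+1) → ℝ)

/-- min over x in [j,k] of dist p (cw x) + rw x -/
def IM (p : Pt d) (j k : Fin (m+1)) : ℝ :=
  sInf {v : ℝ | ∃ x : Fin (m+1), j ≤ x ∧ x ≤ k ∧ v = dist p (cw x) + rw x}

lemma IM_set_finite (p : Pt d) (j k : Fin (m+1)) :
    {v : ℝ | ∃ x : Fin (m+1), j ≤ x ∧ x ≤ k ∧ v = dist p (cw x) + rw x}.Finite := by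
  refine Set.Finite.subset
    (Set.Finite.image (fun x : Fin (m+1) => dist p (cw x) + rw x) (Set.toFinite Set.univ)) ?_
  rintro v ⟨x, _, _, rfl⟩
  exact ⟨x, trivial, rfl⟩

lemma IM_le (p : Pt d) {j k x : Fin (m+1)} (hjx : j ≤ x) (hxk : x ≤ k) :
    IM cw rw p j k ≤ dist p (cw x) + rw x :=
  csInf_le (IM_set_finite cw rw p j k).bddBelow ⟨x, hjx, hxk, rfl⟩

lemma IM_attain (p : Pt d) {j k : Fin (m+1)} (hjk : j ≤ k) :
    ∃ x : Fin (m+1), j ≤ x ∧ x ≤ k ∧ IM cw rw p j k = dist p (cw x) + rw x := by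
  have hne : {v : ℝ | ∃ x : Fin (m+1), j ≤ x ∧ x ≤ k ∧ v = dist p (cw x) + rw x}.Nonempty :=
    ⟨dist p (cw j) + rw j, ⟨j, le_refl j, hjk, rfl⟩⟩
  exact Set.Nonempty.csInf_mem hne (IM_set_finite cw rw p j k)

lemma IM_mono (p : Pt d) {j j' k k' : Fin (m+1)} (hj : j' ≤ j) (hk : k ≤ k') (hjk : j ≤ k) :
    IM cw rw p j' k' ≤ IM cw rw p j k := by
  have hne : {v : ℝ | ∃ x : Fin (m+1), j ≤ x ∧ x ≤ k ∧ v = dist p (cw x) + rw x}.Nonempty :=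
    ⟨dist p (cw j) + rw j, ⟨j, le_refl j, hjk, rfl⟩⟩
  refine csInf_le_csInf (IM_set_finite cw rw p j' k').bddBelow hne ?_
  rintro v ⟨x, h1, h2, rfl⟩
  exact ⟨x, le_trans hj h1, le_trans h2 hk, rfl⟩

/-- max over p in the ball of IM -/
def DDval (C : Pt d) (R : ℝ) (j k : Fin (m+1)) : ℝ :=
  sSup ((fun p => IM cw rw p j k) '' closedBall C R)

lemma DDval_bddAbove (C : Pt d) (R : ℝ) {j k : Fin (m+1)} (hjk : j ≤ k) :
    BddAbove ((fun p => IM cw rw p j k) '' closedBall C R) := by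
  refine ⟨dist C (cw j) + R + rw j, ?_⟩
  rintro v ⟨p, hp, rfl⟩
  have h1 : IM cw rw p j k ≤ dist p (cw j) + rw j := IM_le cw rw p (le_refl j) hjk
  have h2 : dist p (cw j) ≤ dist p C + dist C (cw j) := dist_triangle _ _ _
  have h3 : dist p C ≤ R := mem_closedBall.1 hp
  linarith

lemma le_DDval {C : Pt d} {R : ℝ} {p : Pt d} {j k : Fin (m+1)} (hjk : j ≤ k)
    (hp : p ∈ closedBall C R) : IM cw rw p j k ≤ DDval cw rw C R j k :=
  le_csSup (DDval_bddAbove cw rw C R hjk) ⟨p, hp, rfl⟩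

lemma DDval_eps {C : Pt d} {R : ℝ} (hR : 0 ≤ R) (j k : Fin (m+1)) {ε : ℝ} (hε : 0 < ε) :
    ∃ p ∈ closedBall C R, DDval cw rw C R j k - ε < IM cw rw p j k := by
  have hne : ((fun p => IM cw rw p j k) '' closedBall C R).Nonempty :=
    ⟨IM cw rw C j k, C, mem_closedBall_self hR, rfl⟩
  obtain ⟨v, ⟨p, hp, rfl⟩, hv⟩ := exists_lt_of_lt_csSup hne
    (sub_lt_self (DDval cw rw C R j k) hε)
  exact ⟨p, hp, hv⟩

end Rec


lemma upper_bound {d n m : ℕ}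
    (cu : Fin (n+1) → Pt d) (ru : Fin (n+1) → ℝ)
    (cw : Fin (m+1) → Pt d) (rw : Fin (m+1) → ℝ)
    (DD : Fin (n+1) → Fin (m+1) → Fin (m+1) → ℝ)
    (hDDub : ∀ (i : Fin (n+1)) (j k : Fin (m+1)), j ≤ k →
      ∀ p ∈ closedBall (cu i) (ru i), IM cw rw p j k ≤ DD i j k)
    (FF : Fin (n+1) → Fin (m+1) → ℝ)
    (hFF0 : ∀ k, FF 0 k = DD 0 0 k)
    (hFF : ∀ (i : Fin n) (k : Fin (m+1)),
      FF i.succ k = sInf {v : ℝ | ∃ j : Fin (m+1), j ≤ k ∧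
        v = max (FF i.castSucc j) (DD i.succ j k)})
    (a : Fin (n+1) → Pt d) (b : Fin (m+1) → Pt d)
    (ha : ∀ i, a i ∈ closedBall (cu i) (ru i)) (hb : ∀ j, b j ∈ closedBall (cw j) (rw j)) :
    ∀ k, Fc a b ≤ FF (Fin.last n) k := by
  classical
  have hdistb : ∀ (p : Pt d) (x : Fin (m+1)), dist p (b x) ≤ dist p (cw x) + rw x := by
    intro p x
    calc dist p (b x) ≤ dist p (cw x) + dist (cw x) (b x) := dist_triangle _ _ _
      _ ≤ dist p (cw x) + rw x := by
          have := mem_closedBall.1 (hb x); rw [dist_comm] at this; linarith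
  have key : ∀ (i : Fin (n+1)) (k : Fin (m+1)), ∃ σ : Fin (n+1) → Fin (m+1), Monotone σ ∧
      σ i ≤ k ∧
      (Finset.Iic i).sup' Finset.nonempty_Iic (fun t => dist (a t) (b (σ t))) ≤ FF i k := by
    intro i
    induction i using Fin.induction with
    | zero =>
        intro k
        obtain ⟨x, hx0, hxk, hIM⟩ := IM_attain cw rw (a 0) (Fin.zero_le k)
        refine ⟨fun _ => x, monotone_const, hxk, ?_⟩
        refine Finset.sup'_le _ _ (fun t ht => ?_)
        have ht0 : t = 0 := Fin.le_zero_iff.1 (Finset.mem_Iic.1 ht)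
        rw [ht0, hFF0]
        calc dist (a 0) (b x) ≤ dist (a 0) (cw x) + rw x := hdistb _ _
          _ = IM cw rw (a 0) 0 k := hIM.symm
          _ ≤ DD 0 0 k := hDDub 0 0 k (Fin.zero_le k) (a 0) (ha 0)
    | succ i ih =>
        intro k
        have hSne : {v : ℝ | ∃ j : Fin (m+1), j ≤ k ∧
            v = max (FF i.castSucc j) (DD i.succ j k)}.Nonempty :=
          ⟨max (FF i.castSucc 0) (DD i.succ 0 k), ⟨0, Fin.zero_le k, rfl⟩⟩
        have hSfin : {v : ℝ | ∃ j : Fin (m+1), j ≤ k ∧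
            v = max (FF i.castSucc j) (DD i.succ j k)}.Finite := by
          refine Set.Finite.subset (Set.Finite.image
            (fun j : Fin (m+1) => max (FF i.castSucc j) (DD i.succ j k))
            (Set.toFinite Set.univ)) ?_
          rintro v ⟨j, _, rfl⟩; exact ⟨j, trivial, rfl⟩
        obtain ⟨j, hjk, hval⟩ := Set.Nonempty.csInf_mem hSne hSfin
        have hFFval : FF i.succ k = max (FF i.castSucc j) (DD i.succ j k) :=
          (hFF i k).trans hval
        obtain ⟨σ', hσ'm, hσ'le, hσ'v⟩ := ih j
        obtain ⟨x, hjx, hxk, hIM⟩ := IM_attain cw rw (a i.succ) hjk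
        refine ⟨fun t => if t ≤ i.castSucc then σ' t else x, ?_, ?_, ?_⟩
        · intro s t hst
          by_cases hs : s ≤ i.castSucc <;> by_cases ht : t ≤ i.castSucc <;>
            simp only [hs, ht, if_true, if_false, le_refl]
          · exact hσ'm hst
          · exact le_trans (hσ'm hs) (le_trans hσ'le hjx)
          · exact absurd (le_trans hst ht) hs
        · show (if i.succ ≤ i.castSucc then σ' i.succ else x) ≤ k
          rw [if_neg (not_le.2 (Fin.castSucc_lt_succ : i.castSucc < i.succ))]
          exact hxk
        · refine Finset.sup'_le _ _ (fun t ht => ?_)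
          rw [hFFval]
          show dist (a t) (b (if t ≤ i.castSucc then σ' t else x)) ≤ _
          by_cases htc : t ≤ i.castSucc
          · rw [if_pos htc]
            have h1 : dist (a t) (b (σ' t)) ≤ (Finset.Iic i.castSucc).sup'
                Finset.nonempty_Iic (fun t => dist (a t) (b (σ' t))) :=
              Finset.le_sup' (f := fun t => dist (a t) (b (σ' t))) (Finset.mem_Iic.2 htc)
            exact le_trans h1 (le_trans hσ'v (le_max_left _ _))
          · have ht2 : t = i.succ := by
              have h1 := Finset.mem_Iic.1 ht
              rw [Fin.le_def] at h1
              rw [Fin.le_def] at htc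
              simp only [Fin.val_succ] at h1
              simp only [Fin.coe_castSucc] at htc
              exact Fin.val_injective (by simp only [Fin.val_succ]; omega)
            rw [if_neg htc, ht2]
            calc dist (a i.succ) (b x) ≤ dist (a i.succ) (cw x) + rw x := hdistb _ _
              _ = IM cw rw (a i.succ) j k := hIM.symm
              _ ≤ DD i.succ j k := hDDub i.succ j k hjk (a i.succ) (ha i.succ)
              _ ≤ _ := le_max_right _ _
  intro k
  obtain ⟨σ, hσm, _, hσv⟩ := key (Fin.last n) k
  refine le_trans (Fc_le_mxVal a b σ hσm) (le_trans ?_ hσv)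
  refine Finset.sup'_le _ _ (fun t _ => ?_)
  exact Finset.le_sup' (f := fun t => dist (a t) (b (σ t))) (Finset.mem_Iic.2 (Fin.le_last t))


def finTrunc (n : ℕ) (i : ℕ) : Fin (n+1) := ⟨min i n, by omega⟩

lemma finTrunc_val {n i : ℕ} (h : i ≤ n) : ((finTrunc n i : Fin (n+1)) : ℕ) = i := by
  simp [finTrunc, h]

lemma finTrunc_val' {n i : ℕ} : ((finTrunc n i : Fin (n+1)) : ℕ) = min i n := rfl

lemma finTrunc_coe {n : ℕ} (i : Fin (n+1)) : finTrunc n (i : ℕ) = i := by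
  apply Fin.ext
  simp [finTrunc, Nat.le_of_lt_succ i.isLt]

open Classical in
noncomputable def greedyL (m : ℕ) (Q : ℕ → ℕ → ℕ → Prop) : ℕ → ℕ
  | 0 => 0
  | i+1 =>
      let l := greedyL m Q i
      if h : ∃ k, k ≤ m ∧ l ≤ k ∧ Q i l k then Nat.find h else l

lemma greedyL_succ_spec {m : ℕ} {Q : ℕ → ℕ → ℕ → Prop} {i : ℕ}
    (h : ∃ k, k ≤ m ∧ greedyL m Q i ≤ k ∧ Q i (greedyL m Q i) k) :
    (greedyL m Q (i+1) ≤ m ∧ greedyL m Q i ≤ greedyL m Q (i+1) ∧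
      Q i (greedyL m Q i) (greedyL m Q (i+1))) ∧
    ∀ k, greedyL m Q i ≤ k → k < greedyL m Q (i+1) → ¬ Q i (greedyL m Q i) k := by
  classical
  have hdef : greedyL m Q (i+1) = Nat.find h := by
    simp only [greedyL]
    rw [dif_pos h]
  constructor
  · rw [hdef]
    exact Nat.find_spec h
  · intro k hk1 hk2
    rw [hdef] at hk2
    have := Nat.find_min h hk2
    push_neg at this
    intro hQ
    have hkm : k ≤ m := by
      have h1 := Nat.find_spec h
      omega
    exact absurd hQ (this hkm hk1)

lemma greedyL_succ_fail {m : ℕ} {Q : ℕ → ℕ → ℕ → Prop} {i : ℕ}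
    (h : ¬ ∃ k, k ≤ m ∧ greedyL m Q i ≤ k ∧ Q i (greedyL m Q i) k) :
    greedyL m Q (i+1) = greedyL m Q i := by
  simp only [greedyL]
  rw [dif_neg h]

lemma greedyL_le_m {m : ℕ} {Q : ℕ → ℕ → ℕ → Prop} : ∀ i, greedyL m Q i ≤ m := by
  intro i
  induction i with
  | zero => simp [greedyL]
  | succ i ih =>
      by_cases h : ∃ k, k ≤ m ∧ greedyL m Q i ≤ k ∧ Q i (greedyL m Q i) k
      · exact (greedyL_succ_spec h).1.1
      · rw [greedyL_succ_fail h]; exact ih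

lemma greedyL_mono {m : ℕ} {Q : ℕ → ℕ → ℕ → Prop} : Monotone (greedyL m Q) := by
  apply monotone_nat_of_le_succ
  intro i
  by_cases h : ∃ k, k ≤ m ∧ greedyL m Q i ≤ k ∧ Q i (greedyL m Q i) k
  · exact (greedyL_succ_spec h).1.2.1
  · rw [greedyL_succ_fail h]


lemma lower_bound {d n m : ℕ} (hd : 0 < d)
    (cu : Fin (n+1) → Pt d) (ru : Fin (n+1) → ℝ) (hru : ∀ i, 0 ≤ ru i)
    (cw : Fin (m+1) → Pt d) (rw : Fin (m+1) → ℝ) (hrw : ∀ j, 0 ≤ rw j)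
    (DD : Fin (n+1) → Fin (m+1) → Fin (m+1) → ℝ)
    (hDDeq : ∀ i j k, DD i j k = DDval cw rw (cu i) (ru i) j k)
    (FF : Fin (n+1) → Fin (m+1) → ℝ)
    (hFF0 : ∀ k, FF 0 k = DD 0 0 k)
    (hFF : ∀ (i : Fin n) (k : Fin (m+1)),
      FF i.succ k = sInf {v : ℝ | ∃ j : Fin (m+1), j ≤ k ∧
        v = max (FF i.castSucc j) (DD i.succ j k)})
    {ε : ℝ} (hε : 0 < ε) :
    ∃ (a : Fin (n+1) → Pt d) (b : Fin (m+1) → Pt d),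
      (∀ i, a i ∈ closedBall (cu i) (ru i)) ∧ (∀ j, b j ∈ closedBall (cw j) (rw j)) ∧
      ∀ σ : Fin (n+1) → Fin (m+1), Monotone σ →
        sInf {v : ℝ | ∃ k : Fin (m+1), v = FF (Fin.last n) k} - ε ≤ mxVal a b σ := by
  classical
  set c : ℝ := sInf {v : ℝ | ∃ k : Fin (m+1), v = FF (Fin.last n) k} with hc
  set Q : ℕ → ℕ → ℕ → Prop :=
    fun i j k => DD (finTrunc n i) (finTrunc m j) (finTrunc m k) < c with hQ
  set L : ℕ → ℕ := greedyL m Q with hL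
  have hL0 : L 0 = 0 := rfl
  have hRfin : {v : ℝ | ∃ k : Fin (m+1), v = FF (Fin.last n) k}.Finite := by
    refine Set.Finite.subset (Set.Finite.image (fun k : Fin (m+1) => FF (Fin.last n) k)
      (Set.toFinite Set.univ)) ?_
    rintro v ⟨x, rfl⟩; exact ⟨x, trivial, rfl⟩
  -- some row must fail
  have hP : ∃ i, i ≤ n ∧ ¬ ∃ k, k ≤ m ∧ L i ≤ k ∧ Q i (L i) k := by
    by_contra hcon
    push_neg at hcon
    have hFFlt : ∀ i, i ≤ n → FF (finTrunc n i) (finTrunc m (L (i+1))) < c := by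
      intro i
      induction i with
      | zero =>
          intro _
          have hnf := hcon 0 (Nat.zero_le n)
          have hspec := (greedyL_succ_spec hnf).1.2.2
          rw [← hL] at hspec
          rw [hQ] at hspec
          have h0n : finTrunc n 0 = 0 := Fin.ext (by simp [finTrunc])
          have h0m : finTrunc m (L 0) = 0 := Fin.ext (by simp [hL0, finTrunc])
          rw [h0n, hFF0]
          rw [h0n, h0m] at hspec
          exact hspec
      | succ i ih =>
          intro hin
          have hi_n : i ≤ n := by omega
          have hi_lt : i < n := by omega
          set i' : Fin n := ⟨i, hi_lt⟩ with hi'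
          have h1 : finTrunc n i = i'.castSucc := Fin.ext (by simp [finTrunc, hi']; omega)
          have h2 : finTrunc n (i+1) = i'.succ := Fin.ext (by simp [finTrunc, hi']; omega)
          rw [h2, hFF i' (finTrunc m (L (i+2)))]
          have hnf := hcon (i+1) hin
          have hspec := greedyL_succ_spec hnf
          rw [← hL] at hspec
          have hSfin : {v : ℝ | ∃ j : Fin (m+1), j ≤ finTrunc m (L (i+2)) ∧
              v = max (FF i'.castSucc j) (DD i'.succ j (finTrunc m (L (i+2))))}.Finite := by
            refine Set.Finite.subset (Set.Finite.image
              (fun j : Fin (m+1) => max (FF i'.castSucc j) (DD i'.succ j (finTrunc m (L (i+2)))))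
              (Set.toFinite Set.univ)) ?_
            rintro v ⟨x, _, rfl⟩; exact ⟨x, trivial, rfl⟩
          have hmem : finTrunc m (L (i+1)) ≤ finTrunc m (L (i+2)) := by
            rw [Fin.le_def]
            have h5 : L (i+1) ≤ L (i+2) := hspec.1.2.1
            have h3 := greedyL_le_m (m := m) (Q := Q) (i+1)
            have h4 := greedyL_le_m (m := m) (Q := Q) (i+2)
            rw [← hL] at h3 h4
            rw [finTrunc_val', finTrunc_val']
            omega
          refine lt_of_le_of_lt (csInf_le hSfin.bddBelow ⟨finTrunc m (L (i+1)), hmem, rfl⟩) ?_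
          have hq := hspec.1.2.2
          rw [hQ] at hq
          rw [h2] at hq
          refine max_lt ?_ hq
          have := ih hi_n
          rwa [h1] at this
    have hcle : c ≤ FF (Fin.last n) (finTrunc m (L (n+1))) :=
      csInf_le hRfin.bddBelow ⟨finTrunc m (L (n+1)), rfl⟩
    have hlt := hFFlt n le_rfl
    have hnn : finTrunc n n = Fin.last n := Fin.ext (by simp [finTrunc])
    rw [hnn] at hlt
    linarith
  set i₀ : ℕ := Nat.find hP with hi₀
  have hi₀n : i₀ ≤ n := (Nat.find_spec hP).1
  have hfail₀ : ¬ ∃ k, k ≤ m ∧ L i₀ ≤ k ∧ Q i₀ (L i₀) k := (Nat.find_spec hP).2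
  have hrowlt : ∀ i, i < i₀ → ∃ k, k ≤ m ∧ L i ≤ k ∧ Q i (L i) k := by
    intro i hi
    have h1 := Nat.find_min hP hi
    push_neg at h1
    exact h1 (by omega)
  -- lower bounds on DD along critical intervals
  have hDD0 : ∀ i, i < i₀ → L i < L (i+1) →
      c ≤ DD (finTrunc n i) (finTrunc m (L i)) (finTrunc m (L (i+1) - 1)) := by
    intro i hi hlt
    have hspec := (greedyL_succ_spec (hrowlt i hi)).2
    rw [← hL] at hspec
    have hspec2 := hspec (L (i+1) - 1) (by omega) (by omega)
    rw [hQ] at hspec2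
    exact not_lt.1 hspec2
  have hDDfail : c ≤ DD (finTrunc n i₀) (finTrunc m (L i₀)) (finTrunc m m) := by
    have hLm := greedyL_le_m (m := m) (Q := Q) i₀
    rw [← hL] at hLm
    have h1 : ¬ Q i₀ (L i₀) m := fun hq => hfail₀ ⟨m, le_rfl, hLm, hq⟩
    rw [hQ] at h1
    exact not_lt.1 h1
  -- adversary points in the U-balls
  have hwit : ∀ i : Fin (n+1), ∃ p, p ∈ closedBall (cu i) (ru i) ∧
      (((i:ℕ) < i₀ ∧ L (i:ℕ) < L ((i:ℕ)+1)) →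
        ∀ x : ℕ, L (i:ℕ) ≤ x → x < L ((i:ℕ)+1) →
          c - ε ≤ dist p (cw (finTrunc m x)) + rw (finTrunc m x)) ∧
      ((i:ℕ) = i₀ →
        ∀ x : ℕ, L (i:ℕ) ≤ x → x ≤ m →
          c - ε ≤ dist p (cw (finTrunc m x)) + rw (finTrunc m x)) := by
    intro i
    by_cases h1 : (i:ℕ) < i₀ ∧ L (i:ℕ) < L ((i:ℕ)+1)
    · obtain ⟨p, hp, hplt⟩ := DDval_eps cw rw (hru i)
        (finTrunc m (L (i:ℕ))) (finTrunc m (L ((i:ℕ)+1) - 1)) hε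
      have hDDi := hDD0 (i:ℕ) h1.1 h1.2
      rw [finTrunc_coe i, hDDeq] at hDDi
      refine ⟨p, hp, fun _ x hx1 hx2 => ?_, fun heq => absurd h1.1 (by omega)⟩
      have hLm1 := greedyL_le_m (m := m) (Q := Q) ((i:ℕ)+1)
      rw [← hL] at hLm1
      have hxm : x ≤ m := by omega
      have hIMle : IM cw rw p (finTrunc m (L (i:ℕ))) (finTrunc m (L ((i:ℕ)+1) - 1))
          ≤ dist p (cw (finTrunc m x)) + rw (finTrunc m x) := by
        refine IM_le cw rw p ?_ ?_ <;> rw [Fin.le_def, finTrunc_val', finTrunc_val'] <;> omega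
      have : c - ε < IM cw rw p (finTrunc m (L (i:ℕ))) (finTrunc m (L ((i:ℕ)+1) - 1)) :=
        lt_of_le_of_lt (by linarith) hplt
      linarith
    · by_cases h2 : (i:ℕ) = i₀
      · obtain ⟨p, hp, hplt⟩ := DDval_eps cw rw (hru i)
          (finTrunc m (L (i:ℕ))) (finTrunc m m) hε
        have hDDi := hDDfail
        rw [← h2, finTrunc_coe i, hDDeq] at hDDi
        refine ⟨p, hp, fun hcon => absurd hcon.1 (by omega), fun _ x hx1 hx2 => ?_⟩
        have hIMle : IM cw rw p (finTrunc m (L (i:ℕ))) (finTrunc m m)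
            ≤ dist p (cw (finTrunc m x)) + rw (finTrunc m x) := by
          have hLim := greedyL_le_m (m := m) (Q := Q) (i:ℕ)
          rw [← hL] at hLim
          refine IM_le cw rw p ?_ ?_ <;> rw [Fin.le_def, finTrunc_val', finTrunc_val'] <;> omega
        have : c - ε < IM cw rw p (finTrunc m (L (i:ℕ))) (finTrunc m m) :=
          lt_of_le_of_lt (by linarith) hplt
        linarith
      · exact ⟨cu i, mem_closedBall_self (hru i),
          fun hcon => absurd hcon h1, fun hcon => absurd hcon h2⟩
  choose a hamem haprop1 haprop2 using hwit
  -- which row "owns" column x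
  set rix : ℕ → ℕ := fun x => Nat.findGreatest (fun t => L t ≤ x) i₀ with hrix
  have hrix1 : ∀ x, L (rix x) ≤ x := by
    intro x
    have h1 := Nat.findGreatest_spec (P := fun t => L t ≤ x) (n := i₀)
      (Nat.zero_le i₀) (by simp only [hL0]; exact Nat.zero_le x)
    simpa [hrix] using h1
  have hrix2 : ∀ x, rix x ≤ i₀ := by
    intro x
    simp only [hrix]
    exact Nat.findGreatest_le i₀
  have hrix3 : ∀ x t, t ≤ i₀ → L t ≤ x → t ≤ rix x := by
    intro x t h1 h2
    simp only [hrix]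
    exact Nat.le_findGreatest h1 h2
  -- adversary points in the W-balls : farthest point from the owning row's point
  have hbex : ∀ x : Fin (m+1), ∃ q, q ∈ closedBall (cw x) (rw x) ∧
      dist (a (finTrunc n (rix (x:ℕ)))) q
        = dist (a (finTrunc n (rix (x:ℕ)))) (cw x) + rw x := by
    intro x
    obtain ⟨q, hq1, hq2⟩ := exists_far_point hd (a (finTrunc n (rix (x:ℕ)))) (cw x) (rw x) (hrw x)
    exact ⟨q, hq1, hq2⟩
  choose b hbmem hbdist using hbex
  refine ⟨a, b, hamem, hbmem, ?_⟩
  intro σ hσ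
  set σ' : ℕ → ℕ := fun t => ((σ (finTrunc n t)) : ℕ) with hσ'
  have hσ'mono : ∀ s t, s ≤ t → σ' s ≤ σ' t := by
    intro s t h1
    refine Fin.le_def.1 (hσ ?_)
    rw [Fin.le_def]
    simp [finTrunc]
    omega
  have hσ'm : ∀ t, σ' t ≤ m := fun t => Nat.le_of_lt_succ (σ (finTrunc n t)).isLt
  -- find a hit row
  have hhit : ∃ i, i ≤ n ∧ rix (σ' i) = i ∧
      c - ε ≤ dist (a (finTrunc n i)) (cw (finTrunc m (σ' i))) + rw (finTrunc m (σ' i)) := by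
    by_cases hcase : ∃ i, i < i₀ ∧ σ' i < L (i+1)
    · set i₁ : ℕ := Nat.find hcase with hi₁def
      obtain ⟨hi₁lt, hσlt⟩ := Nat.find_spec hcase
      rw [← hi₁def] at hi₁lt hσlt
      have hlow : L i₁ ≤ σ' i₁ := by
        rcases Nat.eq_zero_or_pos i₁ with h0 | hpos
        · rw [h0, hL0]; exact Nat.zero_le _
        · have ht : i₁ - 1 < i₁ := by omega
          have h1 := Nat.find_min hcase ht
          push_neg at h1
          have h2 : L (i₁ - 1 + 1) ≤ σ' (i₁ - 1) := h1 (by omega)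
          have h3 : σ' (i₁ - 1) ≤ σ' i₁ := hσ'mono _ _ (by omega)
          have h4 : i₁ - 1 + 1 = i₁ := by omega
          rw [h4] at h2
          omega
      have hLlt : L i₁ < L (i₁+1) := lt_of_le_of_lt hlow hσlt
      have hrixeq : rix (σ' i₁) = i₁ := by
        refine le_antisymm ?_ (hrix3 _ i₁ (le_of_lt hi₁lt) hlow)
        by_contra hne
        push_neg at hne
        have h5 : i₁ + 1 ≤ rix (σ' i₁) := hne
        have h6 := greedyL_mono (m := m) (Q := Q) h5
        rw [← hL] at h6
        have h7 := hrix1 (σ' i₁)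
        omega
      refine ⟨i₁, by omega, hrixeq, ?_⟩
      have hprop := haprop1 (finTrunc n i₁)
      rw [finTrunc_val (show i₁ ≤ n by omega)] at hprop
      exact hprop ⟨hi₁lt, hLlt⟩ (σ' i₁) hlow hσlt
    · push_neg at hcase
      have hlow : L i₀ ≤ σ' i₀ := by
        rcases Nat.eq_zero_or_pos i₀ with h0 | hpos
        · rw [h0, hL0]; exact Nat.zero_le _
        · have h2 : L (i₀ - 1 + 1) ≤ σ' (i₀ - 1) := hcase _ (by omega)
          have h3 : σ' (i₀ - 1) ≤ σ' i₀ := hσ'mono _ _ (by omega)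
          have h4 : i₀ - 1 + 1 = i₀ := by omega
          rw [h4] at h2
          omega
      have hrixeq : rix (σ' i₀) = i₀ := le_antisymm (hrix2 _) (hrix3 _ i₀ le_rfl hlow)
      refine ⟨i₀, hi₀n, hrixeq, ?_⟩
      have hprop := haprop2 (finTrunc n i₀)
      rw [finTrunc_val hi₀n] at hprop
      exact hprop rfl (σ' i₀) hlow (hσ'm i₀)
  obtain ⟨i, hin, hrixeq, hbound⟩ := hhit
  have hx : finTrunc m (σ' i) = σ (finTrunc n i) := finTrunc_coe _
  have hdisteq := hbdist (σ (finTrunc n i))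
  have hcoe : ((σ (finTrunc n i) : Fin (m+1)) : ℕ) = σ' i := rfl
  rw [hcoe, hrixeq] at hdisteq
  have hfinal : c - ε ≤ dist (a (finTrunc n i)) (b (σ (finTrunc n i))) := by
    rw [hdisteq, ← hx]
    exact hbound
  exact le_trans hfinal (le_mxVal a b σ (finTrunc n i))


theorem Fmax_both_imprecise_eq_recurrence' {d n m : ℕ} (hd : 0 < d)
    (cu : Fin (n+1) → Pt d) (ru : Fin (n+1) → ℝ) (hru : ∀ i, 0 ≤ ru i)
    (cw : Fin (m+1) → Pt d) (rw : Fin (m+1) → ℝ) (hrw : ∀ j, 0 ≤ rw j)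
    (DD : Fin (n+1) → Fin (m+1) → Fin (m+1) → ℝ)
    (hDD : ∀ i j k, DD i j k = sSup ((fun p => sInf {v : ℝ | ∃ x : Fin (m+1),
        j ≤ x ∧ x ≤ k ∧ v = ballDmax p (cw x) (rw x)}) '' closedBall (cu i) (ru i)))
    (FF : Fin (n+1) → Fin (m+1) → ℝ)
    (hFF0 : ∀ k, FF 0 k = DD 0 0 k)
    (hFF : ∀ (i : Fin n) (k : Fin (m+1)),
      FF i.succ k = sInf {v : ℝ | ∃ j : Fin (m+1), j ≤ k ∧
        v = max (FF i.castSucc j) (DD i.succ j k)}) :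
    sSup {v : ℝ | ∃ (a : Fin (n+1) → Pt d) (b : Fin (m+1) → Pt d),
        (∀ i, a i ∈ closedBall (cu i) (ru i)) ∧
        (∀ j, b j ∈ closedBall (cw j) (rw j)) ∧ v = Fc a b}
    = sInf {v : ℝ | ∃ k : Fin (m+1), v = FF (Fin.last n) k} := by
  classical
  have hball : ∀ (p : Pt d) (x : Fin (m+1)), ballDmax p (cw x) (rw x) = dist p (cw x) + rw x :=
    fun p x => ballDmax_eq hd p (cw x) (rw x) (hrw x)
  have hDDeq : ∀ i j k, DD i j k = DDval cw rw (cu i) (ru i) j k := by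
    intro i j k
    rw [hDD i j k]
    simp only [hball]
    rfl
  have hDDub : ∀ (i : Fin (n+1)) (j k : Fin (m+1)), j ≤ k →
      ∀ p ∈ closedBall (cu i) (ru i), IM cw rw p j k ≤ DD i j k := by
    intro i j k hjk p hp
    rw [hDDeq]
    exact le_DDval cw rw hjk hp
  set S : Set ℝ := {v : ℝ | ∃ (a : Fin (n+1) → Pt d) (b : Fin (m+1) → Pt d),
      (∀ i, a i ∈ closedBall (cu i) (ru i)) ∧
      (∀ j, b j ∈ closedBall (cw j) (rw j)) ∧ v = Fc a b} with hS
  have hSne : S.Nonempty :=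
    ⟨Fc cu cw, cu, cw, fun i => mem_closedBall_self (hru i),
      fun j => mem_closedBall_self (hrw j), rfl⟩
  have hSbdd : BddAbove S := by
    refine ⟨Finset.univ.sup' Finset.univ_nonempty
      (fun i : Fin (n+1) => ru i + dist (cu i) (cw 0) + rw 0), ?_⟩
    rintro v ⟨a, b, ha, hb, rfl⟩
    refine le_trans (Fc_le_mxVal a b (fun _ => 0) monotone_const) ?_
    refine Finset.sup'_le _ _ (fun i _ => ?_)
    refine le_trans ?_ (Finset.le_sup'
      (f := fun i : Fin (n+1) => ru i + dist (cu i) (cw 0) + rw 0) (Finset.mem_univ i))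
    have h1 : dist (a i) (cu i) ≤ ru i := mem_closedBall.1 (ha i)
    have h2 : dist (b 0) (cw 0) ≤ rw 0 := mem_closedBall.1 (hb 0)
    calc dist (a i) (b 0) ≤ dist (a i) (cu i) + dist (cu i) (cw 0) + dist (cw 0) (b 0) :=
          dist_triangle4 _ _ _ _
      _ ≤ ru i + dist (cu i) (cw 0) + rw 0 := by rw [dist_comm (cw 0) (b 0)]; linarith
  refine le_antisymm ?_ ?_
  · refine csSup_le hSne ?_
    rintro v ⟨a, b, ha, hb, rfl⟩
    refine le_csInf ⟨FF (Fin.last n) 0, 0, rfl⟩ ?_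
    rintro w ⟨k, rfl⟩
    exact upper_bound cu ru cw rw DD hDDub FF hFF0 hFF a b ha hb k
  · refine le_of_forall_pos_le_add ?_
    intro ε hε
    obtain ⟨a, b, ha, hb, hlow⟩ :=
      lower_bound hd cu ru hru cw rw hrw DD hDDeq FF hFF0 hFF hε
    have hFcge : sInf {v : ℝ | ∃ k : Fin (m+1), v = FF (Fin.last n) k} - ε ≤ Fc a b := by
      rw [Fc_eq_mxVal a b]
      refine le_csInf ⟨mxVal a b (fun _ => 0), ⟨fun _ => 0, monotone_const, rfl⟩⟩ ?_
      rintro w ⟨σ, hσ, rfl⟩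
      exact hlow σ hσ
    have hmem : Fc a b ≤ sSup S := le_csSup hSbdd ⟨a, b, ha, hb, rfl⟩
    linarith


/-- for two sequences of closed balls `U` and `W`, the upper bound
`F₁^max(U,W)` (supremum of `F_c(A,B)` over realizations `A` of `U` and `B` of `W`) equals
the value of the recurrence `F(1,k) = D(1,1,k)`,
`F(i+1,k) = min_{j ≤ k} max(F(i,j), D(i+1,j,k))` at `i = n`, minimized over the last
index `k`, where `D(i,j,k) = max_{p ∈ u_i} min_{j ≤ x ≤ k} max_{q ∈ w_x} d(p,q)`. -/
theorem Fmax_both_imprecise_eq_recurrence {d n m : ℕ} (hd : 0 < d)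
    (cu : Fin (n+1) → Pt d) (ru : Fin (n+1) → ℝ) (hru : ∀ i, 0 ≤ ru i)
    (cw : Fin (m+1) → Pt d) (rw : Fin (m+1) → ℝ) (hrw : ∀ j, 0 ≤ rw j)
    (DD : Fin (n+1) → Fin (m+1) → Fin (m+1) → ℝ)
    (hDD : ∀ i j k, DD i j k = sSup ((fun p => sInf {v : ℝ | ∃ x : Fin (m+1),
        j ≤ x ∧ x ≤ k ∧ v = ballDmax p (cw x) (rw x)}) '' closedBall (cu i) (ru i)))
    (FF : Fin (n+1) → Fin (m+1) → ℝ)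
    (hFF0 : ∀ k, FF 0 k = DD 0 0 k)
    (hFF : ∀ (i : Fin n) (k : Fin (m+1)),
      FF i.succ k = sInf {v : ℝ | ∃ j : Fin (m+1), j ≤ k ∧
        v = max (FF i.castSucc j) (DD i.succ j k)}) :
    sSup {v : ℝ | ∃ (a : Fin (n+1) → Pt d) (b : Fin (m+1) → Pt d),
        (∀ i, a i ∈ closedBall (cu i) (ru i)) ∧
        (∀ j, b j ∈ closedBall (cw j) (rw j)) ∧ v = Fc a b}
    = sInf {v : ℝ | ∃ k : Fin (m+1), v = FF (Fin.last n) k} := by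
  exact Fmax_both_imprecise_eq_recurrence' hd cu ru hru cw rw hrw DD hDD FF hFF0 hFF
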